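/- Let A ∈ ℝ^{d×d} with d ≥ 2. Then x^T A (y - x) = 0 for all x, y in the interior of the standard (d-1)-simplex if and only if A = c 1^T for some vector c ∈ ℝ^d (i.e., all columns of A are equal). -/
import Mathlib

open Finset Matrix

lemma aux_dot_zero (d : ℕ) (hd : 2 ≤ d) (v : Fin d → ℝ)
    (h : ∀ x : Fin d → ℝ, (∀ i, 0 < x i) → ∑ i, x i = 1 → ∑ i, x i * v i = 0) :
    v = 0 := by
  have hdpos : (0:ℝ) < (d:ℝ) := by
    exact_mod_cast lt_of_lt_of_le (by norm_num) hd
  set u : Fin d → ℝ := fun _ => (d:ℝ)⁻¹ with hu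
  have hupos : ∀ i, 0 < u i := fun i => inv_pos.mpr hdpos
  have husum : ∑ i, u i = 1 := by
    simp [hu, Finset.sum_const, Finset.card_fin]
    field_simp
  set ε : ℝ := (2*(d:ℝ))⁻¹ with hε
  have hεpos : 0 < ε := by rw [hε]; positivity
  have hkey1 : 0 < (d:ℝ)⁻¹ + ε := by positivity
  have hkey2 : 0 < (d:ℝ)⁻¹ - ε := by
    rw [hε, sub_pos]
    apply inv_strictAnti₀ hdpos
    linarith
  -- v is constant
  have hconst : ∀ a b : Fin d, v a = v b := by
    intro a b
    by_cases hab : a = b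
    · rw [hab]
    · have hba : b ≠ a := Ne.symm hab
      set x : Fin d → ℝ := fun i => u i + ((if i = a then ε else 0) + (if i = b then -ε else 0)) with hx
      have hxpos : ∀ i, 0 < x i := by
        intro i
        simp only [hx]
        by_cases h1 : i = a
        · have h2 : i ≠ b := by rw [h1]; exact hab
          simpa [h1, hab, hu] using hkey1
        · by_cases h2 : i = b
          · simpa [h2, hba, hu, sub_eq_add_neg] using hkey2
          · simpa [h1, h2] using hupos i
      have hxsum : ∑ i, x i = 1 := by
        simp only [hx, Finset.sum_add_distrib, husum, Finset.sum_ite_eq']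
        simp
      have h1 := h x hxpos hxsum
      have h2 := h u hupos husum
      simp only [hx, add_mul, Finset.sum_add_distrib, ite_mul, zero_mul, neg_mul,
        Finset.sum_ite_eq', Finset.mem_univ, if_true, Finset.sum_neg_distrib] at h1
      rw [h2] at h1
      have h3 : ε * (v a - v b) = 0 := by ring_nf; ring_nf at h1; linarith
      rcases mul_eq_zero.mp h3 with h | h
      · exact absurd h (ne_of_gt hεpos)
      · linarith
  funext i
  have h2 := h u hupos husum
  have heq : ∑ j, u j * v j = ∑ j : Fin d, (d:ℝ)⁻¹ * v i :=
    Finset.sum_congr rfl fun j _ => by rw [hconst j i]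
  rw [heq, Finset.sum_const, Finset.card_fin, nsmul_eq_mul] at h2
  have hd0 : (d:ℝ) ≠ 0 := ne_of_gt hdpos
  field_simp at h2
  simpa using h2

theorem quadratic_form_zero_iff_rank_one (d : ℕ) (hd : 2 ≤ d)
    (A : Matrix (Fin d) (Fin d) ℝ) :
    (∀ x y : Fin d → ℝ, (∀ i, 0 < x i) → ∑ i, x i = 1 →
      (∀ i, 0 < y i) → ∑ i, y i = 1 →
      x ⬝ᵥ (A *ᵥ (y - x)) = 0)
    ↔ ∃ c : Fin d → ℝ, ∀ i j, A i j = c i := by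
  constructor
  · intro H
    have hdpos : (0:ℝ) < (d:ℝ) := by
      exact_mod_cast lt_of_lt_of_le (by norm_num) hd
    set u : Fin d → ℝ := fun _ => (d:ℝ)⁻¹ with hu
    have hupos : ∀ i, 0 < u i := fun i => inv_pos.mpr hdpos
    have husum : ∑ i, u i = 1 := by
      simp [hu, Finset.sum_const, Finset.card_fin]
      field_simp
    set ε : ℝ := (2*(d:ℝ))⁻¹ with hε
    have hεpos : 0 < ε := by rw [hε]; positivity
    have hkey1 : 0 < (d:ℝ)⁻¹ + ε := by positivity
    have hkey2 : 0 < (d:ℝ)⁻¹ - ε := by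
      rw [hε, sub_pos]
      apply inv_strictAnti₀ hdpos
      linarith
    have hA : ∀ j k i, A i j = A i k := by
      intro j k i
      by_cases hjk : j = k
      · rw [hjk]
      · have hkj : k ≠ j := Ne.symm hjk
        have hcol : (fun i => A i j - A i k) = 0 := by
          apply aux_dot_zero d hd
          intro x hx hxs
          set y : Fin d → ℝ := fun m => u m + ((if m = j then ε else 0) + (if m = k then -ε else 0)) with hy
          have hypos : ∀ m, 0 < y m := by
            intro m
            simp only [hy]
            by_cases h1 : m = j
            · simpa [h1, hjk, hu] using hkey1
            · by_cases h2 : m = k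
              · simpa [h2, hkj, hu, sub_eq_add_neg] using hkey2
              · simpa [h1, h2] using hupos m
          have hysum : ∑ m, y m = 1 := by
            simp only [hy, Finset.sum_add_distrib, husum, Finset.sum_ite_eq']
            simp
          have h1 := H x y hx hxs hypos hysum
          have h2 := H x u hx hxs hupos husum
          have h3 : x ⬝ᵥ (A *ᵥ (y - u)) = 0 := by
            have he : y - u = (y - x) - (u - x) := by
              funext m; simp only [Pi.sub_apply]; ring
            rw [he, Matrix.mulVec_sub, dotProduct_sub, h1, h2, sub_zero]
          simp only [dotProduct, mulVec, Pi.sub_apply, hy, hu] at h3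
          have h4 : ε * ∑ i, x i * (A i j - A i k) = 0 := by
            rw [Finset.mul_sum, ← h3]
            apply Finset.sum_congr rfl
            intro i _
            have : ∀ m : Fin d, A i m * ((d:ℝ)⁻¹ + ((if m = j then ε else 0) + (if m = k then -ε else 0)) - (d:ℝ)⁻¹)
                = (if m = j then A i m * ε else 0) + (if m = k then -(A i m * ε) else 0) := by
              intro m
              by_cases h1 : m = j
              · by_cases h2 : m = k
                · exact absurd (h1 ▸ h2 : j = k) hjk
                · simp [h1, h2, hjk]
              · by_cases h2 : m = k
                · simp [h1, h2, hkj]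
                · simp [h1, h2]
            simp only [dotProduct] at *
            rw [Finset.sum_congr rfl (fun m _ => this m), Finset.sum_add_distrib,
              Finset.sum_ite_eq', Finset.sum_ite_eq']
            simp only [Finset.mem_univ, if_true]
            ring
          rcases mul_eq_zero.mp h4 with h | h
          · exact absurd h (ne_of_gt hεpos)
          · simpa using h
        have := congrFun hcol i
        simpa [sub_eq_zero] using this
    exact ⟨fun i => A i ⟨0, by omega⟩, fun i j => hA j ⟨0, by omega⟩ i⟩
  · rintro ⟨c, hc⟩ x y hx hxs hy hys
    have hz : ∀ i, (A *ᵥ (y - x)) i = 0 := by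
      intro i
      simp only [mulVec, dotProduct, Pi.sub_apply, hc]
      rw [← Finset.mul_sum, Finset.sum_sub_distrib, hys, hxs, sub_self, mul_zero]
    simp [dotProduct, hz]
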